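/- In the game G' where at least one clause player plays Out in a given ε-WSNE, iterated propagation forces all players to play Out: any variable player adjacent to a clause player playing Out must play Out, and any clause player adjacent to a variable player playing Out must play Out; hence if the interaction graph is connected and one player plays Out, all players play Out. -/
import Mathlib


namespace Stmt8

/-- A monotone cubic formula with exactly three distinct variables per clause. -/
structure CubicFormula (V C : Type) where
  var : C → Fin 3 → V
  inj : ∀ c, Function.Injective (var c)

variable {V C : Type} [Fintype V] [Fintype C] [DecidableEq V] [DecidableEq C]

/-- α is a 1-in-3 satisfying assignment: exactly one variable per clause is true. -/
def OneInThree (F : CubicFormula V C) (α : V → Bool) : Prop :=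
  ∀ c : C, (Finset.univ.filter (fun j : Fin 3 => α (F.var c j) = true)).card = 1

/-- Each variable occurs in exactly three clause positions (the formula is cubic). -/
def Cubic (F : CubicFormula V C) : Prop :=
  ∀ v : V, (Finset.univ.filter (fun cj : C × Fin 3 => F.var cj.1 cj.2 = v)).card = 3

/-- The bipartite interaction graph between variable players and clause players. -/
def interactionGraph (F : CubicFormula V C) : SimpleGraph (V ⊕ C) :=
  SimpleGraph.fromRel (fun a b =>
    match a, b with
    | Sum.inl v, Sum.inr c => ∃ j, F.var c j = v
    | _, _ => False)

/-- Payoff to clause player `c_j` on the edge with its `j`-th variable, when the clause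
plays `s` (`none` = Out) and the variable plays `b` (`none` = Out). -/
noncomputable def edgeClausePay (cc κ : ℝ) (j : Fin 3) (s : Option (Fin 3)) (b : Option Bool) : ℝ :=
  match s, b with
  | none, _ => 1 / 3
  | some t, some true => if t = j then κ else 0
  | some _, some false => cc * κ
  | some _, none => 0

/-- Payoff to the variable player on the edge where it is the `j`-th variable of a
clause playing `s`, when the variable plays `b` (`none` = Out). -/
noncomputable def edgeVarPay (ε : ℝ) (j : Fin 3) (s : Option (Fin 3)) (b : Option Bool) : ℝ :=
  match b, s with
  | none, _ => 1 / 3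
  | some true, s => if s = some j then 1 / 3 - ε / 3 else 0
  | some false, some t => if t = j then 0 else 1 / 3 - ε / 3
  | some false, none => 0

/-- Payoff of clause player `c` for pure strategy `s`, against the variable players'
mixed strategies `p`. -/
noncomputable def clausePure (F : CubicFormula V C) (cc κ : ℝ) (p : V → Option Bool → ℝ) (c : C)
    (s : Option (Fin 3)) : ℝ :=
  ∑ j : Fin 3, ∑ b : Option Bool, p (F.var c j) b * edgeClausePay cc κ j s b

/-- Payoff of variable player `v` for pure strategy `b`, against the clause players'
mixed strategies `q`. -/
noncomputable def varPure (F : CubicFormula V C) (ε : ℝ) (q : C → Option (Fin 3) → ℝ) (v : V)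
    (b : Option Bool) : ℝ :=
  ∑ c : C, ∑ j : Fin 3, ∑ s : Option (Fin 3),
    (if F.var c j = v then q c s * edgeVarPay ε j s b else 0)

/-- A valid mixed strategy profile of the game G'. -/
def IsProfile (p : V → Option Bool → ℝ) (q : C → Option (Fin 3) → ℝ) : Prop :=
  (∀ v b, 0 ≤ p v b) ∧ (∀ v, ∑ b, p v b = 1) ∧
  (∀ c s, 0 ≤ q c s) ∧ (∀ c, ∑ s, q c s = 1)

/-- An ε-well-supported Nash equilibrium of G': every pure strategy played with
positive probability is an ε-best response. -/
def IsWSNE (F : CubicFormula V C) (ε cc κ : ℝ) (p : V → Option Bool → ℝ)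
    (q : C → Option (Fin 3) → ℝ) : Prop :=
  IsProfile p q ∧
  (∀ v b, 0 < p v b → ∀ b', varPure F ε q v b ≥ varPure F ε q v b' - ε) ∧
  (∀ c s, 0 < q c s → ∀ s', clausePure F cc κ p c s ≥ clausePure F cc κ p c s' - ε)


section Aux

variable {V C : Type} [Fintype V] [Fintype C] [DecidableEq V] [DecidableEq C]

lemma q_some_eq_zero {q : C → Option (Fin 3) → ℝ} (hq0 : ∀ c s, 0 ≤ q c s)
    (hq1 : ∀ c, ∑ s, q c s = 1) {c : C} (hc : q c none = 1) (t : Fin 3) :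
    q c (some t) = 0 := by
  have h := hq1 c
  rw [Fintype.sum_option, hc] at h
  have hsum : ∑ t, q c (some t) = 0 := by linarith
  exact (Finset.sum_eq_zero_iff_of_nonneg (fun t _ => hq0 c (some t))).1 hsum t
    (Finset.mem_univ t)

lemma p_some_eq_zero {p : V → Option Bool → ℝ} (hp0 : ∀ v b, 0 ≤ p v b)
    (hp1 : ∀ v, ∑ b, p v b = 1) {v : V} (hv : p v none = 1) (b : Bool) :
    p v (some b) = 0 := by
  have h := hp1 v
  rw [Fintype.sum_option, hv] at h
  have hsum : ∑ b, p v (some b) = 0 := by linarith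
  exact (Finset.sum_eq_zero_iff_of_nonneg (fun b _ => hp0 v (some b))).1 hsum b
    (Finset.mem_univ b)

lemma varPure_none_eq (F : CubicFormula V C) (hcub : Cubic F) (ε : ℝ)
    (q : C → Option (Fin 3) → ℝ) (hq1 : ∀ c, ∑ s, q c s = 1) (v : V) :
    varPure F ε q v none = 1 := by
  unfold varPure
  have h1 : ∀ c j, (∑ s : Option (Fin 3),
      (if F.var c j = v then q c s * edgeVarPay ε j s none else 0))
      = if F.var c j = v then (1 : ℝ)/3 else 0 := by
    intro c j
    by_cases h : F.var c j = v
    · have hpay : ∀ s, edgeVarPay ε j s none = 1/3 := fun s => rfl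
      simp only [h, if_true, hpay, ← Finset.sum_mul, hq1 c, one_mul]
    · simp [h]
  simp only [h1]
  rw [← Fintype.sum_prod_type']
  rw [← Finset.sum_filter, Finset.sum_const, hcub v]
  norm_num

lemma varPure_some_le (F : CubicFormula V C) (hcub : Cubic F) {ε : ℝ} (hε1 : ε ≤ 1)
    (q : C → Option (Fin 3) → ℝ) (hq0 : ∀ c s, 0 ≤ q c s) (hq1 : ∀ c, ∑ s, q c s = 1)
    (c0 : C) (j0 : Fin 3) (hc0 : q c0 none = 1) (b : Bool) :
    varPure F ε q (F.var c0 j0) (some b) ≤ 2/3 - 2*ε/3 := by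
  set v := F.var c0 j0 with hv
  set E : C → Fin 3 → ℝ := fun c j => ∑ s, q c s * edgeVarPay ε j s (some b) with hE
  have hswap : ∀ c j, (∑ s : Option (Fin 3),
      (if F.var c j = v then q c s * edgeVarPay ε j s (some b) else 0))
      = if F.var c j = v then E c j else 0 := by
    intro c j
    by_cases h : F.var c j = v <;> simp [h, hE]
  have hpay : ∀ (j : Fin 3) (s : Option (Fin 3)),
      edgeVarPay ε j s (some b) ≤ 1/3 - ε/3 := by
    intro j s
    cases b <;> cases s <;> simp only [edgeVarPay] <;>
      first
        | (split_ifs <;> linarith)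
        | linarith
  have hEle : ∀ c j, E c j ≤ 1/3 - ε/3 := by
    intro c j
    calc E c j ≤ ∑ s, q c s * (1/3 - ε/3) := by
          apply Finset.sum_le_sum
          intro s _
          exact mul_le_mul_of_nonneg_left (hpay j s) (hq0 c s)
      _ = 1/3 - ε/3 := by rw [← Finset.sum_mul, hq1 c, one_mul]
  have hE0 : E c0 j0 = 0 := by
    rw [hE]
    simp only
    rw [Fintype.sum_option]
    have h1 : edgeVarPay ε j0 none (some b) = 0 := by cases b <;> simp [edgeVarPay]
    have h2 : ∀ t : Fin 3, q c0 (some t) = 0 := q_some_eq_zero hq0 hq1 hc0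
    simp [h1, h2]
  unfold varPure
  simp only [hswap]
  rw [← Fintype.sum_prod_type']
  rw [← Finset.sum_filter]
  set S := Finset.univ.filter (fun cj : C × Fin 3 => F.var cj.1 cj.2 = v) with hS
  have hmem : (c0, j0) ∈ S := by
    rw [hS]
    simp [hv]
  have hcard : S.card = 3 := hcub v
  have hstep : E c0 j0 + ∑ cj ∈ S.erase (c0, j0), E cj.1 cj.2
      = ∑ cj ∈ S, E cj.1 cj.2 :=
    Finset.add_sum_erase S (fun cj : C × Fin 3 => E cj.1 cj.2) hmem
  rw [← hstep, hE0, zero_add]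
  have hle : ∑ cj ∈ S.erase (c0, j0), E cj.1 cj.2
      ≤ (S.erase (c0, j0)).card • (1/3 - ε/3) :=
    Finset.sum_le_card_nsmul _ _ _ (fun cj _ => hEle cj.1 cj.2)
  rw [Finset.card_erase_of_mem hmem, hcard] at hle
  norm_num at hle
  linarith

lemma clausePure_none_eq (F : CubicFormula V C) (cc κ : ℝ)
    (p : V → Option Bool → ℝ) (hp1 : ∀ v, ∑ b, p v b = 1) (c : C) :
    clausePure F cc κ p c none = 1 := by
  unfold clausePure
  have hpay : ∀ (j : Fin 3) (b : Option Bool), edgeClausePay cc κ j none b = 1/3 :=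
    fun j b => rfl
  simp only [hpay, ← Finset.sum_mul, hp1, one_mul]
  simp [Fin.sum_univ_three]

lemma clausePure_some_le (F : CubicFormula V C) {ε cc κ : ℝ} (hε1 : ε < 1)
    (hcc0 : 0 < cc) (hcc1 : cc < 1) (hκ : κ = (1 - ε) / (1 + 2 * cc))
    (p : V → Option Bool → ℝ) (hp0 : ∀ v b, 0 ≤ p v b) (hp1 : ∀ v, ∑ b, p v b = 1)
    (c : C) (j0 : Fin 3) (h0 : p (F.var c j0) none = 1) (t : Fin 3) :
    clausePure F cc κ p c (some t) ≤ (1 - ε) - cc * κ := by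
  have hden : (0:ℝ) < 1 + 2 * cc := by linarith
  have hκ0 : 0 < κ := by rw [hκ]; apply div_pos <;> linarith
  have hκq : κ * (1 + 2 * cc) = 1 - ε := by
    rw [hκ]; field_simp
  set E : Fin 3 → ℝ := fun j => ∑ b : Option Bool,
    p (F.var c j) b * edgeClausePay cc κ j (some t) b with hE
  set B : Fin 3 → ℝ := fun j => if t = j then κ else cc * κ with hB
  have hEexp : ∀ j, E j = p (F.var c j) none * 0
      + (p (F.var c j) (some true) * (if t = j then κ else 0)
      + p (F.var c j) (some false) * (cc * κ)) := by
    intro j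
    rw [hE]
    simp only
    rw [Fintype.sum_option, Fintype.sum_bool]
    rfl
  have hEle : ∀ j, E j ≤ B j := by
    intro j
    rw [hEexp j, hB]
    have h1 := hp0 (F.var c j) (some true)
    have h2 := hp0 (F.var c j) (some false)
    have h3 := hp0 (F.var c j) none
    have h4 := hp1 (F.var c j)
    rw [Fintype.sum_option, Fintype.sum_bool] at h4
    simp only
    split_ifs
    · nlinarith [mul_nonneg h3 hκ0.le,
        mul_nonneg (mul_nonneg h2 (by linarith : (0:ℝ) ≤ 1 - cc)) hκ0.le]
    · nlinarith [mul_nonneg (mul_nonneg (by linarith : (0:ℝ) ≤ 1 - p (F.var c j) (some false))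
        hcc0.le) hκ0.le, mul_nonneg h1 (mul_nonneg hcc0.le hκ0.le)]
  have hE0 : E j0 = 0 := by
    rw [hEexp j0, h0]
    have h2 := p_some_eq_zero hp0 hp1 h0
    rw [h2 true, h2 false]
    ring
  have hsumB : ∑ j : Fin 3, B j = κ + 2 * (cc * κ) := by
    rw [hB]
    fin_cases t <;> simp [Fin.sum_univ_three] <;> ring
  have hBj0 : cc * κ ≤ B j0 := by
    rw [hB]
    simp only
    split_ifs
    · nlinarith
    · exact le_refl _
  have hcp : clausePure F cc κ p c (some t) = ∑ j : Fin 3, E j := rfl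
  rw [hcp]
  have h1 := Finset.add_sum_erase Finset.univ E (Finset.mem_univ j0)
  rw [← h1, hE0, zero_add]
  have h2 : ∑ j ∈ Finset.univ.erase j0, E j ≤ ∑ j ∈ Finset.univ.erase j0, B j :=
    Finset.sum_le_sum (fun j _ => hEle j)
  have h3 : ∑ j ∈ Finset.univ.erase j0, B j = (∑ j : Fin 3, B j) - B j0 :=
    Finset.sum_erase_eq_sub (Finset.mem_univ j0)
  rw [h3, hsumB] at h2
  nlinarith

end Aux

/-- Propagation of Out in any ε-WSNE of G': a variable player adjacent to a clause
player playing Out must play Out, a clause player adjacent to a variable player playing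
Out must play Out, and hence, if the interaction graph is connected and some player
plays Out, then all players play Out. -/
theorem stmt_8 (F : CubicFormula V C) (hcub : Cubic F)
    (ε cc κ : ℝ) (hε0 : 0 < ε) (hε1 : ε < 1)
    (hcc0 : max (1 - 3 * ε / 2) 0 < cc) (hcc1 : cc < 1)
    (hκ : κ = (1 - ε) / (1 + 2 * cc))
    (p : V → Option Bool → ℝ) (q : C → Option (Fin 3) → ℝ)
    (hwsne : IsWSNE F ε cc κ p q) :
    (∀ c j, q c none = 1 → p (F.var c j) none = 1) ∧
    (∀ c j, p (F.var c j) none = 1 → q c none = 1) ∧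
    ((interactionGraph F).Connected →
      ((∃ v, p v none = 1) ∨ (∃ c, q c none = 1)) →
      (∀ v, p v none = 1) ∧ (∀ c, q c none = 1)) := by
  obtain ⟨⟨hp0, hp1, hq0, hq1⟩, hvar, hcl⟩ := hwsne
  have hcc : 0 < cc := lt_of_le_of_lt (le_max_right _ _) hcc0
  have hκ0 : 0 < κ := by
    rw [hκ]
    apply div_pos <;> linarith
  -- Claim 1: clause Out forces variable Out
  have claim1 : ∀ c j, q c none = 1 → p (F.var c j) none = 1 := by
    intro c j hc
    set v := F.var c j with hv
    have hz : ∀ b : Bool, p v (some b) = 0 := by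
      intro b
      by_contra hne
      have hpos : 0 < p v (some b) := lt_of_le_of_ne (hp0 v (some b)) (Ne.symm hne)
      have hge := hvar v (some b) hpos none
      have h1 : varPure F ε q v none = 1 := varPure_none_eq F hcub ε q hq1 v
      have h2 : varPure F ε q v (some b) ≤ 2/3 - 2*ε/3 :=
        varPure_some_le F hcub (le_of_lt hε1) q hq0 hq1 c j hc b
      rw [h1] at hge
      linarith
    have h := hp1 v
    rw [Fintype.sum_option, Fintype.sum_bool, hz true, hz false] at h
    linarith
  -- Claim 2: variable Out forces clause Out
  have claim2 : ∀ c j, p (F.var c j) none = 1 → q c none = 1 := by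
    intro c j hpv
    have hz : ∀ t : Fin 3, q c (some t) = 0 := by
      intro t
      by_contra hne
      have hpos : 0 < q c (some t) := lt_of_le_of_ne (hq0 c (some t)) (Ne.symm hne)
      have hge := hcl c (some t) hpos none
      have h1 : clausePure F cc κ p c none = 1 := clausePure_none_eq F cc κ p hp1 c
      have h2 : clausePure F cc κ p c (some t) ≤ (1 - ε) - cc * κ :=
        clausePure_some_le F hε1 hcc hcc1 hκ p hp0 hp1 c j hpv t
      rw [h1] at hge
      nlinarith
    have h := hq1 c
    rw [Fintype.sum_option] at h
    have : ∑ t, q c (some t) = 0 := Finset.sum_eq_zero (fun t _ => hz t)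
    linarith
  refine ⟨claim1, claim2, ?_⟩
  intro hconn hex
  set S : V ⊕ C → Prop := Sum.elim (fun v => p v none = 1) (fun c => q c none = 1) with hSdef
  have key : ∀ {x y : V ⊕ C}, (interactionGraph F).Adj x y → S x → S y := by
    intro x y hxy hx
    rw [interactionGraph, SimpleGraph.fromRel_adj] at hxy
    obtain ⟨hne, h⟩ := hxy
    cases x with
    | inl v =>
      cases y with
      | inl v' => exact h.elim False.elim False.elim
      | inr c =>
        rcases h with ⟨j, hj⟩ | h
        · exact claim2 c j (by rwa [hj])
        · exact h.elim
    | inr c =>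
      cases y with
      | inl v =>
        rcases h with h | ⟨j, hj⟩
        · exact h.elim
        · have := claim1 c j hx
          rwa [hj] at this
      | inr c' => exact h.elim False.elim False.elim
  have walkS : ∀ (x y : V ⊕ C), (interactionGraph F).Walk x y → S x → S y := by
    intro x y w
    induction w with
    | nil => exact id
    | cons h w ih => exact fun hx => ih (key h hx)
  have hx0 : ∃ x0, S x0 := by
    rcases hex with ⟨v, hv⟩ | ⟨c, hc⟩
    · exact ⟨Sum.inl v, hv⟩
    · exact ⟨Sum.inr c, hc⟩
  obtain ⟨x0, hx0⟩ := hx0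
  have hall : ∀ y, S y := by
    intro y
    obtain ⟨w⟩ := hconn.preconnected x0 y
    exact walkS x0 y w hx0
  exact ⟨fun v => hall (Sum.inl v), fun c => hall (Sum.inr c)⟩

end Stmt8
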